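/- Let H be a 2N×2N real symmetric invertible matrix. Let Σ_pp, Σ_qq be N×N diagonal matrices with strictly positive diagonal entries and Σ_p := [[Σ_pp, 0],[0, Σ_qq]]; let Σ_nv, Σ_nθ be N×N diagonal matrices with strictly positive diagonal entries and Σ_n := [[Σ_nv, 0],[0, Σ_nθ]]. Let Σ_v := H⁻¹ Σ_p H⁻¹ and Δ := (Σ_v + Σ_n)⁻¹ − Σ_v⁻¹. Then for all indices i, j: |Δ(i,j)| ≤ (λmax(H²))² · (max_i max(Σ_nv(i,i), Σ_nθ(i,i))) / (min_i min(Σ_pp(i,i)², Σ_qq(i,i)²)), where λmax(A) denotes the largest eigenvalue of a real symmetric matrix A. -/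

import Mathlib

open Matrix

/-- The largest eigenvalue of a real symmetric (Hermitian) matrix. -/
noncomputable def maxEig {n : Type*} [Fintype n] [DecidableEq n]
    {A : Matrix n n ℝ} (hA : A.IsHermitian) : ℝ := ⨆ k, hA.eigenvalues k

private lemma herm_vecMul {n : Type*} [Fintype n] {M : Matrix n n ℝ}
    (hM : M.IsHermitian) (v : n → ℝ) : v ᵥ* M = M *ᵥ v := by
  rw [← mulVec_transpose, ← conjTranspose_eq_transpose_of_trivial, hM]

private lemma psd_quad {n : Type*} [Fintype n] {M : Matrix n n ℝ}
    (hM : M.PosSemidef) (x : n → ℝ) : 0 ≤ x ⬝ᵥ M *ᵥ x := by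
  simpa using hM.dotProduct_mulVec_nonneg x

private lemma quad_le_maxEig {n : Type*} [Fintype n] [DecidableEq n] [Nonempty n]
    {A : Matrix n n ℝ} (hA : A.IsHermitian) (x : n → ℝ) :
    x ⬝ᵥ A *ᵥ x ≤ maxEig hA * (x ⬝ᵥ x) := by
  set U : Matrix n n ℝ := (hA.eigenvectorUnitary : Matrix n n ℝ) with hUdef
  have hvm : ∀ v : n → ℝ, v ᵥ* U = (star U) *ᵥ v := by
    intro v
    rw [star_eq_conjTranspose, conjTranspose_eq_transpose_of_trivial, mulVec_transpose]
  set y : n → ℝ := (star U) *ᵥ x with hy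
  have h1 : x ⬝ᵥ A *ᵥ x = ∑ k, hA.eigenvalues k * (y k)^2 := by
    conv_lhs => rw [hA.spectral_theorem]
    rw [Unitary.conjStarAlgAut_apply, ← mulVec_mulVec, ← mulVec_mulVec, dotProduct_mulVec, hvm, ← hy,
      RCLike.ofReal_real_eq_id]
    simp [dotProduct, mulVec_diagonal]
    ring_nf
    exact Finset.sum_congr rfl (fun k _ => by ring)
  have hvm' : ∀ v : n → ℝ, v ᵥ* (star U) = U *ᵥ v := by
    intro v
    rw [star_eq_conjTranspose, conjTranspose_eq_transpose_of_trivial, vecMul_transpose]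
  have h2 : x ⬝ᵥ x = ∑ k, (y k)^2 := by
    have hU1 : U * star U = 1 := (Matrix.mem_unitaryGroup_iff).mp hA.eigenvectorUnitary.2
    have : y ⬝ᵥ y = x ⬝ᵥ x := by
      rw [hy, dotProduct_mulVec, hvm', mulVec_mulVec, hU1, one_mulVec]
    rw [← this]
    simp [dotProduct, pow_two]
  have hbdd : BddAbove (Set.range hA.eigenvalues) := Set.finite_range _ |>.bddAbove
  rw [h1, h2, Finset.mul_sum]
  exact Finset.sum_le_sum fun k _ =>
    mul_le_mul_of_nonneg_right (le_ciSup hbdd k) (sq_nonneg _)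

private lemma mulVec_self_dot {n : Type*} [Fintype n] [DecidableEq n] {M : Matrix n n ℝ}
    (hM : M.IsHermitian) (w : n → ℝ) :
    (M *ᵥ w) ⬝ᵥ (M *ᵥ w) = w ⬝ᵥ (M^2) *ᵥ w := by
  rw [dotProduct_mulVec, herm_vecMul hM, mulVec_mulVec, ← pow_two, dotProduct_comm]

private lemma dot_single_mulVec {n : Type*} [Fintype n] [DecidableEq n]
    (M : Matrix n n ℝ) (i j : n) :
    Pi.single i 1 ⬝ᵥ M *ᵥ Pi.single j 1 = M i j := by
  simp [mulVec_single, single_dotProduct]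

private lemma diag_quad_le {n : Type*} [Fintype n] [DecidableEq n]
    (d : n → ℝ) (c : ℝ) (hd : ∀ k, d k ≤ c) (y : n → ℝ) :
    y ⬝ᵥ (diagonal d) *ᵥ y ≤ c * (y ⬝ᵥ y) := by
  simp only [dotProduct, mulVec_diagonal, Finset.mul_sum]
  exact Finset.sum_le_sum fun k _ => by nlinarith [sq_nonneg (y k), hd k]

/-- second part of Corollary 1 of the paper: noise bound in the special case
`Σ_pq = 0` and `Σ_{n_v n_θ} = 0`. -/
theorem stmt13 (N : ℕ)
    (H : Matrix (Fin N ⊕ Fin N) (Fin N ⊕ Fin N) ℝ)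
    (hH : H.IsHermitian) (hHu : IsUnit H)
    (Spp Sqq Snv Snθ : Matrix (Fin N) (Fin N) ℝ)
    (hSpp : Spp.IsDiag) (hSqq : Sqq.IsDiag) (hSnv : Snv.IsDiag) (hSnθ : Snθ.IsDiag)
    (hSpppos : ∀ i, 0 < Spp i i) (hSqqpos : ∀ i, 0 < Sqq i i)
    (hSnvpos : ∀ i, 0 < Snv i i) (hSnθpos : ∀ i, 0 < Snθ i i)
    (Sp Sn : Matrix (Fin N ⊕ Fin N) (Fin N ⊕ Fin N) ℝ)
    (hSp : Sp = Matrix.fromBlocks Spp 0 0 Sqq)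
    (hSn : Sn = Matrix.fromBlocks Snv 0 0 Snθ)
    (Sv : Matrix (Fin N ⊕ Fin N) (Fin N ⊕ Fin N) ℝ) (hSv : Sv = H⁻¹ * Sp * H⁻¹)
    (Δ : Matrix (Fin N ⊕ Fin N) (Fin N ⊕ Fin N) ℝ) (hΔ : Δ = (Sv + Sn)⁻¹ - Sv⁻¹) :
    ∀ i j, |Δ i j| ≤
      (maxEig (hH.pow 2)) ^ 2 * (⨆ i, max (Snv i i) (Snθ i i)) /
        (⨅ i, min ((Spp i i) ^ 2) ((Sqq i i) ^ 2)) := by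
  obtain rfl | hN := Nat.eq_zero_or_pos N
  · intro i j; rcases i with a | a <;> exact a.elim0
  have : Nonempty (Fin N) := ⟨⟨0, hN⟩⟩
  set lam : ℝ := maxEig (hH.pow 2) with hlam
  set cN : ℝ := ⨆ i, max (Snv i i) (Snθ i i) with hcN
  set m : ℝ := ⨅ i, min ((Spp i i) ^ 2) ((Sqq i i) ^ 2) with hm
  -- diagonal forms
  set dp : Fin N ⊕ Fin N → ℝ := Sum.elim Spp.diag Sqq.diag with hdp
  set dn : Fin N ⊕ Fin N → ℝ := Sum.elim Snv.diag Snθ.diag with hdn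
  have hSp' : Sp = diagonal dp := by
    rw [hSp, ← hSpp.diagonal_diag, ← hSqq.diagonal_diag, fromBlocks_diagonal]
  have hSn' : Sn = diagonal dn := by
    rw [hSn, ← hSnv.diagonal_diag, ← hSnθ.diagonal_diag, fromBlocks_diagonal]
  have hdppos : ∀ k, 0 < dp k := by rintro (i | i); exacts [hSpppos i, hSqqpos i]
  have hdnpos : ∀ k, 0 < dn k := by rintro (i | i); exacts [hSnvpos i, hSnθpos i]
  -- positivity / invertibility
  have hSpPD : Sp.PosDef := by rw [hSp']; exact posDef_diagonal_iff.mpr hdppos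
  have hSnPD : Sn.PosDef := by rw [hSn']; exact posDef_diagonal_iff.mpr hdnpos
  have hHdet : IsUnit H.det := (Matrix.isUnit_iff_isUnit_det H).mp hHu
  have hHidet : IsUnit (H⁻¹).det := H.isUnit_nonsing_inv_det hHdet
  have hSpdet : IsUnit Sp.det := isUnit_iff_ne_zero.mpr hSpPD.det_pos.ne'
  have hSvdet : IsUnit Sv.det := by
    rw [hSv, det_mul, det_mul]
    exact (hHidet.mul hSpdet).mul hHidet
  have hSPD : (Sv + Sn).PosDef := by
    have hSvPSD : Sv.PosSemidef := by
      have h1 := (hSpPD.posSemidef).conjTranspose_mul_mul_same H⁻¹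
      rwa [hH.inv, ← hSv] at h1
    exact Matrix.PosDef.posSemidef_add hSvPSD hSnPD
  have hSdet : IsUnit (Sv + Sn).det := isUnit_iff_ne_zero.mpr hSPD.det_pos.ne'
  -- P and Q
  set P : Matrix (Fin N ⊕ Fin N) (Fin N ⊕ Fin N) ℝ := Sv⁻¹ with hP
  set Q : Matrix (Fin N ⊕ Fin N) (Fin N ⊕ Fin N) ℝ := (Sv + Sn)⁻¹ with hQ
  have hPeq : P = H * Sp⁻¹ * H := by
    rw [hP, hSv, Matrix.mul_inv_rev, Matrix.mul_inv_rev,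
      H.nonsing_inv_nonsing_inv hHdet, Matrix.mul_assoc]
  have hPPSD : P.PosSemidef := by
    have h1 := (hSpPD.posSemidef.inv).conjTranspose_mul_mul_same H
    rwa [hH.eq, ← hPeq] at h1
  have hQPD : Q.PosDef := hSPD.inv
  have hQPSD : Q.PosSemidef := hQPD.posSemidef
  have hSnPSD : Sn.PosSemidef := hSnPD.posSemidef
  have hPH : Pᴴ = P := hPPSD.isHermitian
  have hQH : Qᴴ = Q := hQPSD.isHermitian
  have hSnH : Snᴴ = Sn := hSnPSD.isHermitian
  -- key algebraic identities
  have id1 : P = Q + Q * Sn * P := by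
    have h1 : Q * (Sv + Sn) = 1 := nonsing_inv_mul _ hSdet
    have h2 : Sv * P = 1 := mul_nonsing_inv _ hSvdet
    calc P = (Q * (Sv + Sn)) * P := by rw [h1, Matrix.one_mul]
      _ = Q * Sv * P + Q * Sn * P := by rw [mul_add, add_mul]
      _ = Q + Q * Sn * P := by rw [Matrix.mul_assoc Q Sv P, h2, Matrix.mul_one]
  have id2 : P = Q + P * Sn * Q := by
    have h1 : (Sv + Sn) * Q = 1 := mul_nonsing_inv _ hSdet
    have h2 : P * Sv = 1 := nonsing_inv_mul _ hSvdet
    calc P = P * ((Sv + Sn) * Q) := by rw [h1, Matrix.mul_one]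
      _ = P * Sv * Q + P * Sn * Q := by
          rw [add_mul, mul_add, ← Matrix.mul_assoc, ← Matrix.mul_assoc]
      _ = Q + P * Sn * Q := by rw [h2, Matrix.one_mul]
  have hD1 : P - Q = Q * Sn * P := sub_eq_iff_eq_add.mpr (id1.trans (add_comm _ _))
  have hD2 : P - Q = P * Sn * Q := sub_eq_iff_eq_add.mpr (id2.trans (add_comm _ _))
  have dec1 : P - Q = Q * Sn * Q + Q * Sn * (P * Sn * Q) := by
    rw [hD1]
    conv_lhs => rw [id2]
    rw [mul_add]
  have dec2 : (P * Sn * P) - (P - Q) = P * Sn * (Q * Sn * P) := by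
    rw [hD2, ← Matrix.mul_sub, hD1]
  -- PSD of decomposed pieces
  have psd1 : (Q * Sn * Q).PosSemidef := by
    have h1 := hSnPSD.conjTranspose_mul_mul_same Q
    rwa [hQH] at h1
  have psd2 : (Q * Sn * (P * Sn * Q)).PosSemidef := by
    have h1 := hPPSD.conjTranspose_mul_mul_same (Sn * Q)
    rw [conjTranspose_mul, hQH, hSnH] at h1
    have h2 : Q * Sn * P * (Sn * Q) = Q * Sn * (P * Sn * Q) := by
      simp only [Matrix.mul_assoc]
    rwa [h2] at h1
  have psd3 : (P * Sn * (Q * Sn * P)).PosSemidef := by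
    have h1 := hQPSD.conjTranspose_mul_mul_same (Sn * P)
    rw [conjTranspose_mul, hPH, hSnH] at h1
    have h2 : P * Sn * Q * (Sn * P) = P * Sn * (Q * Sn * P) := by
      simp only [Matrix.mul_assoc]
    rwa [h2] at h1
  have hDPSD : (P - Q).PosSemidef := dec1 ▸ psd1.add psd2
  have hUBPSD : ((P * Sn * P) - (P - Q)).PosSemidef := dec2 ▸ psd3
  -- scalar bounds
  have hmpos : 0 < m := by
    obtain ⟨i₀, hi₀⟩ := exists_eq_ciInf_of_finite
      (f := fun i : Fin N => min ((Spp i i) ^ 2) ((Sqq i i) ^ 2))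
    rw [hm, ← hi₀]
    exact lt_min (pow_pos (hSpppos i₀) 2) (pow_pos (hSqqpos i₀) 2)
  have hmle : ∀ k, m ≤ (dp k) ^ 2 := by
    have hbdd : BddBelow (Set.range fun i : Fin N =>
        min ((Spp i i) ^ 2) ((Sqq i i) ^ 2)) := (Set.finite_range _).bddBelow
    rintro (i | i)
    · exact le_trans (ciInf_le hbdd i) (min_le_left _ _)
    · exact le_trans (ciInf_le hbdd i) (min_le_right _ _)
  have hcNge : ∀ k, dn k ≤ cN := by
    have hbdd : BddAbove (Set.range fun i : Fin N =>
        max (Snv i i) (Snθ i i)) := (Set.finite_range _).bddAbove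
    rintro (i | i)
    · exact le_trans (le_max_left _ _) (le_ciSup hbdd i)
    · exact le_trans (le_max_right _ _) (le_ciSup hbdd i)
  have hcN0 : 0 ≤ cN := le_trans (hdnpos (Sum.inl ⟨0, hN⟩)).le (hcNge _)
  have hH2PSD : (H ^ 2).PosSemidef := by
    have h : H ^ 2 = Hᴴ * H := by rw [pow_two, hH.eq]
    rw [h]; exact posSemidef_conjTranspose_mul_self H
  have hlam0 : 0 ≤ lam := by
    have hbdd : BddAbove (Set.range (hH.pow 2).eigenvalues) := (Set.finite_range _).bddAbove
    exact le_trans (hH2PSD.eigenvalues_nonneg (Sum.inl ⟨0, hN⟩))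
      (le_ciSup hbdd (Sum.inl ⟨0, hN⟩))
  -- main quadratic bound
  have hSpinv : Sp⁻¹ = diagonal (fun k => (dp k)⁻¹) := by
    apply inv_eq_left_inv
    rw [hSp', diagonal_mul_diagonal, ← diagonal_one]
    exact congrArg diagonal (funext fun k => inv_mul_cancel₀ (hdppos k).ne')
  have hmain : ∀ x, x ⬝ᵥ (P - Q) *ᵥ x ≤ (lam ^ 2 * cN / m) * (x ⬝ᵥ x) := by
    intro x
    set z : Fin N ⊕ Fin N → ℝ := H *ᵥ x with hz
    set w : Fin N ⊕ Fin N → ℝ := Sp⁻¹ *ᵥ z with hw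
    set y : Fin N ⊕ Fin N → ℝ := P *ᵥ x with hy
    have step0 : x ⬝ᵥ (P - Q) *ᵥ x ≤ x ⬝ᵥ (P * Sn * P) *ᵥ x := by
      have h := psd_quad hUBPSD x
      rw [sub_mulVec, dotProduct_sub] at h
      linarith
    have step1 : x ⬝ᵥ (P * Sn * P) *ᵥ x = y ⬝ᵥ Sn *ᵥ y := by
      rw [← mulVec_mulVec, ← mulVec_mulVec, dotProduct_mulVec, herm_vecMul hPPSD.isHermitian]
    have step2 : y ⬝ᵥ Sn *ᵥ y ≤ cN * (y ⬝ᵥ y) := by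
      rw [hSn']; exact diag_quad_le dn cN hcNge y
    have hyw : y = H *ᵥ w := by rw [hy, hPeq, ← mulVec_mulVec, ← mulVec_mulVec]
    have step3 : y ⬝ᵥ y = w ⬝ᵥ (H ^ 2) *ᵥ w := by rw [hyw]; exact mulVec_self_dot hH w
    have step4 : w ⬝ᵥ (H ^ 2) *ᵥ w ≤ lam * (w ⬝ᵥ w) := quad_le_maxEig (hH.pow 2) w
    have step5 : w ⬝ᵥ w ≤ m⁻¹ * (z ⬝ᵥ z) := by
      rw [hw, hSpinv]
      simp only [dotProduct, mulVec_diagonal, Finset.mul_sum]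
      refine Finset.sum_le_sum fun k _ => ?_
      have h1 : (dp k)⁻¹ * z k * ((dp k)⁻¹ * z k) = ((dp k) ^ 2)⁻¹ * (z k * z k) := by
        rw [pow_two, mul_inv]; ring
      rw [h1]
      have h2 : ((dp k) ^ 2)⁻¹ ≤ m⁻¹ := inv_anti₀ hmpos (hmle k)
      exact mul_le_mul_of_nonneg_right h2 (mul_self_nonneg _)
    have step6 : z ⬝ᵥ z ≤ lam * (x ⬝ᵥ x) := by
      rw [hz]
      calc (H *ᵥ x) ⬝ᵥ (H *ᵥ x) = x ⬝ᵥ (H ^ 2) *ᵥ x := mulVec_self_dot hH x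
        _ ≤ lam * (x ⬝ᵥ x) := quad_le_maxEig (hH.pow 2) x
    calc x ⬝ᵥ (P - Q) *ᵥ x ≤ x ⬝ᵥ (P * Sn * P) *ᵥ x := step0
      _ = y ⬝ᵥ Sn *ᵥ y := step1
      _ ≤ cN * (y ⬝ᵥ y) := step2
      _ = cN * (w ⬝ᵥ (H ^ 2) *ᵥ w) := by rw [step3]
      _ ≤ cN * (lam * (w ⬝ᵥ w)) := mul_le_mul_of_nonneg_left step4 hcN0
      _ ≤ cN * (lam * (m⁻¹ * (z ⬝ᵥ z))) :=
          mul_le_mul_of_nonneg_left (mul_le_mul_of_nonneg_left step5 hlam0) hcN0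
      _ ≤ cN * (lam * (m⁻¹ * (lam * (x ⬝ᵥ x)))) := by
          refine mul_le_mul_of_nonneg_left (mul_le_mul_of_nonneg_left
            (mul_le_mul_of_nonneg_left step6 (by positivity)) hlam0) hcN0
      _ = (lam ^ 2 * cN / m) * (x ⬝ᵥ x) := by field_simp
  -- entrywise conclusion
  have hDpos : ∀ x, 0 ≤ x ⬝ᵥ (P - Q) *ᵥ x := psd_quad hDPSD
  intro i j
  have hΔD : Δ i j = -((P - Q) i j) := by
    rw [hΔ]; simp [hP, hQ, Matrix.sub_apply]
  rw [hΔD, abs_neg]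
  have hsym : (P - Q) j i = (P - Q) i j := by
    have h := hDPSD.isHermitian.apply i j
    simpa using h
  have hii : 0 ≤ (P - Q) i i := by
    have h := hDpos (Pi.single i 1)
    rwa [dot_single_mulVec] at h
  have hjj : 0 ≤ (P - Q) j j := by
    have h := hDpos (Pi.single j 1)
    rwa [dot_single_mulVec] at h
  rcases eq_or_ne i j with rfl | hij
  · have h := hmain (Pi.single i 1)
    rw [dot_single_mulVec] at h
    rw [abs_of_nonneg hii]
    calc (P - Q) i i ≤ (lam ^ 2 * cN / m) * (Pi.single i 1 ⬝ᵥ Pi.single i (1:ℝ)) := h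
      _ = lam ^ 2 * cN / m := by simp [single_dotProduct]
  · have hplus := hmain (Pi.single i 1 + Pi.single j 1)
    have hminus := hmain (Pi.single i 1 - Pi.single j 1)
    simp only [mulVec_add, dotProduct_add, add_dotProduct, mulVec_sub, dotProduct_sub,
      sub_dotProduct, dot_single_mulVec, single_dotProduct, Pi.single_apply,
      mulVec_single_one, col_apply, mul_one, hij, hij.symm, if_false, one_mul, if_true] at hplus hminus
    rw [hsym] at hplus hminus
    rw [abs_le]
    constructor <;> nlinarith [hplus, hminus, hii, hjj]
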